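/- The spine of a trim lattice L (the set of elements lying on some chain of maximum length) is closed under the meet and join of L, i.e., it is a sublattice of L. -/

import Mathlib

variable {α : Type*}

/-- An element is join-irreducible if it is not the minimum and is not a join
of two strictly smaller elements. -/
def JoinIrred [Lattice α] (a : α) : Prop :=
  ¬ IsBot a ∧ ∀ b c : α, b < a → c < a → b ⊔ c ≠ a

/-- An element is meet-irreducible if it is not the maximum and is not a meet
of two strictly larger elements. -/
def MeetIrred [Lattice α] (a : α) : Prop :=
  ¬ IsTop a ∧ ∀ b c : α, a < b → a < c → b ⊓ c ≠ a

/-- An element `x` is left modular if `(y ⊔ x) ⊓ z = y ⊔ (x ⊓ z)` for all `y < z`. -/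
def LeftModular [Lattice α] (x : α) : Prop :=
  ∀ y z : α, y < z → (y ⊔ x) ⊓ z = y ⊔ (x ⊓ z)

/-- A maximal chain `⊥ = x 0 ⋖ x 1 ⋖ ⋯ ⋖ x n = ⊤` all of whose elements are left modular. -/
def IsLMChain [Lattice α] {n : ℕ} (x : Fin (n + 1) → α) : Prop :=
  IsBot (x 0) ∧ IsTop (x (Fin.last n)) ∧ (∀ i : Fin n, x i.castSucc ⋖ x i.succ) ∧
    ∀ i, LeftModular (x i)

/-- A finite lattice is trim if it has a left modular maximal chain of `n + 1` elements,
exactly `n` join-irreducibles and exactly `n` meet-irreducibles. -/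
def Trim (α : Type*) [Lattice α] [Finite α] : Prop :=
  ∃ (n : ℕ) (x : Fin (n + 1) → α), IsLMChain x ∧
    Nat.card {v : α // JoinIrred v} = n ∧ Nat.card {v : α // MeetIrred v} = n

/-- The spine of a finite lattice: elements lying on some chain of maximum length. -/
def Spine [Lattice α] [Finite α] (a : α) : Prop :=
  ∃ C : Set α, a ∈ C ∧ IsChain (· ≤ ·) C ∧
    ∀ D : Set α, IsChain (· ≤ ·) D → D.ncard ≤ C.ncard

section Helpers

set_option linter.unusedSectionVars false

variable [Lattice α] [Finite α]

/-- If every join-irreducible below `a` is below `c`, then `a ≤ c`. -/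
lemma genJI (c : α) : ∀ a : α, (∀ j, JoinIrred j → j ≤ a → j ≤ c) → a ≤ c := by
  intro a
  induction a using WellFoundedLT.induction with
  | _ a ih =>
    intro h
    by_cases hb : IsBot a
    · exact hb c
    by_cases hj : JoinIrred a
    · exact h a hj le_rfl
    · rw [JoinIrred, not_and] at hj
      push_neg at hj
      obtain ⟨u, v, hu, hv, heq⟩ := hj hb
      have hu' := ih u hu (fun j hj1 hj2 => h j hj1 (hj2.trans hu.le))
      have hv' := ih v hv (fun j hj1 hj2 => h j hj1 (hj2.trans hv.le))
      calc a = u ⊔ v := heq.symm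
        _ ≤ c := sup_le hu' hv'

/-- If every meet-irreducible above `a` is above `c`, then `c ≤ a`. -/
lemma genMI (c : α) : ∀ a : α, (∀ m, MeetIrred m → a ≤ m → c ≤ m) → c ≤ a := by
  intro a
  induction a using WellFoundedGT.induction with
  | _ a ih =>
    intro h
    by_cases hb : IsTop a
    · exact hb c
    by_cases hj : MeetIrred a
    · exact h a hj le_rfl
    · rw [MeetIrred, not_and] at hj
      push_neg at hj
      obtain ⟨u, v, hu, hv, heq⟩ := hj hb
      have hu' := ih u hu (fun m hm1 hm2 => h m hm1 (hu.le.trans hm2))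
      have hv' := ih v hv (fun m hm1 hm2 => h m hm1 (hv.le.trans hm2))
      calc c ≤ u ⊓ v := le_inf hu' hv'
        _ = a := heq

lemma existsJI {a c : α} (h : ¬ a ≤ c) : ∃ j : α, JoinIrred j ∧ j ≤ a ∧ ¬ j ≤ c := by
  by_contra hc
  push_neg at hc
  exact h (genJI c a fun j h1 h2 => hc j h1 h2)

lemma existsMI {a c : α} (h : ¬ c ≤ a) : ∃ m : α, MeetIrred m ∧ a ≤ m ∧ ¬ c ≤ m := by
  by_contra hc
  push_neg at hc
  exact h (genMI c a fun m h1 h2 => hc m h1 h2)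

/-- A chain of cardinality `N` can be enumerated by a strictly monotone map on `Fin N`. -/
lemma chain_enum {C : Set α} (hC : IsChain (· ≤ ·) C) {N : ℕ} (hN : C.ncard = N) :
    ∃ f : Fin N → α, StrictMono f ∧ Set.range f = C := by
  letI : LinearOrder C :=
    { (inferInstance : PartialOrder C) with
      le_total := fun x y => by
        rcases eq_or_ne (x : α) (y : α) with h | h
        · exact Or.inl (le_of_eq (Subtype.ext h))
        · exact hC x.2 y.2 h
      toDecidableLE := Classical.decRel _ }
  haveI : Fintype C := Fintype.ofFinite C
  have hcard : Fintype.card C = N := by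
    rw [← hN, ← Nat.card_coe_set_eq, Nat.card_eq_fintype_card]
  refine ⟨fun i => ((monoEquivOfFin C hcard) i : α), ?_, ?_⟩
  · intro i j hij
    exact Subtype.coe_lt_coe.mpr ((monoEquivOfFin C hcard).strictMono hij)
  · ext t
    constructor
    · rintro ⟨i, rfl⟩; exact ((monoEquivOfFin C hcard) i).2
    · intro ht
      exact ⟨(monoEquivOfFin C hcard).symm ⟨t, ht⟩, by simp⟩

lemma fin_succ_le {M : ℕ} {i i' : Fin M} (h : i < i') :
    (i.succ : Fin (M+1)) ≤ i'.castSucc := by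
  rw [Fin.le_def, Fin.val_succ, Fin.coe_castSucc]
  exact h

/-- Choice of a join-irreducible entering at each step of a strictly monotone chain. -/
lemma steps_JI {M : ℕ} {f : Fin (M+1) → α} (hf : StrictMono f) :
    ∃ j : Fin M → α, (∀ i, JoinIrred (j i)) ∧ (∀ i, j i ≤ f i.succ) ∧
      (∀ i, ¬ j i ≤ f i.castSucc) ∧ (∀ i i' : Fin M, i < i' → j i ≠ j i') := by
  have h : ∀ i : Fin M, ∃ jj, JoinIrred jj ∧ jj ≤ f i.succ ∧ ¬ jj ≤ f i.castSucc :=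
    fun i => existsJI (hf (Fin.castSucc_lt_succ (i := i))).not_ge
  choose j h1 h2 h3 using h
  refine ⟨j, h1, h2, h3, fun i i' hlt he => ?_⟩
  exact h3 i' (he ▸ ((h2 i).trans (hf.monotone (fin_succ_le hlt))))

/-- Choice of a meet-irreducible leaving at each step of a strictly monotone chain. -/
lemma steps_MI {M : ℕ} {f : Fin (M+1) → α} (hf : StrictMono f) :
    ∃ m : Fin M → α, (∀ i, MeetIrred (m i)) ∧ (∀ i, f i.castSucc ≤ m i) ∧
      (∀ i, ¬ f i.succ ≤ m i) ∧ (∀ i i' : Fin M, i < i' → m i ≠ m i') := by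
  have h : ∀ i : Fin M, ∃ mm, MeetIrred mm ∧ f i.castSucc ≤ mm ∧ ¬ f i.succ ≤ mm :=
    fun i => existsMI (hf (Fin.castSucc_lt_succ (i := i))).not_ge
  choose m h1 h2 h3 using h
  refine ⟨m, h1, h2, h3, fun i i' hlt he => ?_⟩
  exact h3 i (he ▸ ((hf.monotone (fin_succ_le hlt)).trans (h2 i')))

lemma strictMono_card_le {n M : ℕ} (hJ : Nat.card {v : α // JoinIrred v} = n)
    {f : Fin (M+1) → α} (hf : StrictMono f) : M ≤ n := by
  obtain ⟨j, h1, h2, h3, h4⟩ := steps_JI hf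
  have hinj : Function.Injective (fun i : Fin M => (⟨j i, h1 i⟩ : {v : α // JoinIrred v})) := by
    intro i i' he
    simp only [Subtype.mk.injEq] at he
    rcases lt_trichotomy i i' with hlt | heq | hlt
    · exact absurd he (h4 i i' hlt)
    · exact heq
    · exact absurd he.symm (h4 i' i hlt)
  calc M = Nat.card (Fin M) := by simp
    _ ≤ Nat.card {v : α // JoinIrred v} := Nat.card_le_card_of_injective _ hinj
    _ = n := hJ

/-- Every chain has at most `n + 1` elements, where `n` is the number of join-irreducibles. -/
lemma chain_card_le {n : ℕ} (hJ : Nat.card {v : α // JoinIrred v} = n)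
    {C : Set α} (hC : IsChain (· ≤ ·) C) : C.ncard ≤ n + 1 := by
  cases hN : C.ncard with
  | zero => omega
  | succ M =>
    obtain ⟨f, hf, -⟩ := chain_enum hC hN
    have := strictMono_card_le hJ hf
    omega

/-- The range of a monotone map on `Fin (M+1)` has more elements than strict steps. -/
lemma range_card_ge {M : ℕ} (q : Fin (M+1) → α) (hq : Monotone q) :
    {i : Fin M | q i.castSucc < q i.succ}.ncard + 1 ≤ (Set.range q).ncard := by
  set S := {i : Fin M | q i.castSucc < q i.succ} with hS
  have hinj : Function.Injective (fun z : ↥S ⊕ Unit =>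
      (match z with
        | Sum.inl i => (⟨q (i : Fin M).castSucc, Set.mem_range_self _⟩ : ↥(Set.range q))
        | Sum.inr _ => ⟨q (Fin.last M), Set.mem_range_self _⟩)) := by
    rintro (⟨i, hi⟩ | ⟨⟩) (⟨i', hi'⟩ | ⟨⟩) he <;> simp only [Subtype.mk.injEq] at he
    · rcases lt_trichotomy i i' with hlt | heq | hlt
      · have : q i.castSucc < q i'.castSucc := lt_of_lt_of_le hi (hq (fin_succ_le hlt))
        exact absurd he this.ne
      · simp [heq]
      · have : q i'.castSucc < q i.castSucc := lt_of_lt_of_le hi' (hq (fin_succ_le hlt))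
        exact absurd he this.ne'
    · exact absurd he (lt_of_lt_of_le hi (hq (Fin.le_last _))).ne
    · exact absurd he (lt_of_lt_of_le hi' (hq (Fin.le_last _))).ne'
    · rfl
  have hcard := Nat.card_le_card_of_injective _ hinj
  rw [Nat.card_sum] at hcard
  simp only [Nat.card_unique, Nat.card_coe_set_eq] at hcard
  exact hcard

/-- The join of two elements on maximum-cardinality chains is on a maximum chain. -/
lemma spine_sup {n : ℕ} (hJ : Nat.card {v : α // JoinIrred v} = n)
    (hM : Nat.card {v : α // MeetIrred v} = n)
    {c d : Fin (n+1) → α} (hc : StrictMono c) (hd : StrictMono d)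
    (k l : Fin (n+1)) : Spine (c k ⊔ d l) := by
  have hkn : (k : ℕ) ≤ n := Nat.lt_succ_iff.mp k.isLt
  set a := c k with ha
  set q : Fin (n+1) → α := fun i => a ⊔ d i with hq
  have hqmono : Monotone q := fun i j hij => sup_le_sup_left (hd.monotone hij) a
  set S := {i : Fin n | q i.castSucc < q i.succ} with hS
  obtain ⟨m, hm1, hm2, hm3, hm4⟩ := steps_MI hd
  obtain ⟨mc, hmc1, hmc2, hmc3, hmc4⟩ := steps_MI hc
  -- the meet-irreducible of a degenerate step is not above `a`
  have hdeg : ∀ i : Fin n, i ∈ Sᶜ → ¬ a ≤ m i := by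
    intro i hi hle
    rw [Set.mem_compl_iff, hS, Set.mem_setOf_eq] at hi
    have heq : q i.castSucc = q i.succ :=
      ((hqmono (Fin.castSucc_lt_succ (i := i)).le).lt_or_eq).resolve_left hi
    apply hm3 i
    calc d i.succ ≤ q i.succ := le_sup_right
      _ = a ⊔ d i.castSucc := heq.symm
      _ ≤ m i := sup_le hle (hm2 i)
  -- meet-irreducibles of upper steps of `c` are above `a`
  have hup : ∀ j : Fin (n - (k : ℕ)), a ≤ mc ⟨(k : ℕ) + j, by omega⟩ := by
    intro j
    refine le_trans (hc.monotone ?_) (hmc2 ⟨(k : ℕ) + j, by omega⟩)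
    rw [Fin.le_def, Fin.coe_castSucc]
    simp only [ha]
    omega
  -- count: degenerate steps + upper steps ≤ n
  have hkey : (Sᶜ : Set (Fin n)).ncard + (n - (k : ℕ)) ≤ n := by
    have hinj : Function.Injective (fun z : ↥(Sᶜ) ⊕ Fin (n - (k : ℕ)) =>
        (match z with
          | Sum.inl i => (⟨m i, hm1 _⟩ : {v : α // MeetIrred v})
          | Sum.inr j => ⟨mc ⟨(k : ℕ) + j, by omega⟩, hmc1 _⟩)) := by
      rintro (⟨i, hi⟩ | j) (⟨i', hi'⟩ | j') he <;> simp only [Subtype.mk.injEq] at he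
      · have : i = i' := by
          rcases lt_trichotomy i i' with hlt | heq | hlt
          · exact absurd he (hm4 _ _ hlt)
          · exact heq
          · exact absurd he.symm (hm4 _ _ hlt)
        subst this
        rfl
      · exact absurd (he ▸ hup j') (hdeg i hi)
      · exact absurd (he ▸ hup j) (hdeg i' hi')
      · have hidx : (⟨(k : ℕ) + j, by omega⟩ : Fin n) = ⟨(k : ℕ) + j', by omega⟩ := by
          rcases lt_trichotomy (⟨(k : ℕ) + j, by omega⟩ : Fin n) ⟨(k : ℕ) + j', by omega⟩
            with hlt | heq | hlt
          · exact absurd he (hmc4 _ _ hlt)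
          · exact heq
          · exact absurd he.symm (hmc4 _ _ hlt)
        have : (j : ℕ) = (j' : ℕ) := by
          have := Fin.val_eq_of_eq hidx
          simpa using this
        simp [Fin.ext_iff, this]
    have hle := Nat.card_le_card_of_injective _ hinj
    rw [Nat.card_sum, hM] at hle
    simpa [Nat.card_coe_set_eq] using hle
  have hcompl : (S : Set (Fin n)).ncard + (Sᶜ : Set (Fin n)).ncard = n := by
    have := Set.ncard_add_ncard_compl S
    simpa using this
  -- the upper chain has at least n - k + 1 elements
  have hQ : (n - (k : ℕ)) + 1 ≤ (Set.range q).ncard := by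
    have := range_card_ge q hqmono
    rw [← hS] at this
    omega
  -- the lower chain
  set e : Fin ((k : ℕ) + 1) → α := fun i => c ⟨i, by omega⟩ with he
  have hemono : StrictMono e := by
    intro i j hij
    apply hc
    rw [Fin.lt_def]
    exact hij
  have hPcard : (Set.range e).ncard = (k : ℕ) + 1 := by
    rw [← Nat.card_coe_set_eq, Nat.card_range_of_injective hemono.injective]
    simp
  have hPa : ∀ p ∈ Set.range e, p ≤ a := by
    rintro _ ⟨i, rfl⟩
    apply hc.monotone
    rw [Fin.le_def]
    simpa using by omega
  have hQa : ∀ x ∈ Set.range q, a ≤ x := by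
    rintro _ ⟨i, rfl⟩
    exact le_sup_left
  have hchain : IsChain (· ≤ ·) (Set.range e ∪ Set.range q) := by
    rintro x (hx | hx) y (hy | hy) hne
    · obtain ⟨i, rfl⟩ := hx; obtain ⟨j, rfl⟩ := hy
      rcases le_total i j with hh | hh
      · exact Or.inl (hemono.monotone hh)
      · exact Or.inr (hemono.monotone hh)
    · exact Or.inl ((hPa x hx).trans (hQa y hy))
    · exact Or.inr ((hPa y hy).trans (hQa x hx))
    · obtain ⟨i, rfl⟩ := hx; obtain ⟨j, rfl⟩ := hy
      rcases le_total i j with hh | hh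
      · exact Or.inl (hqmono hh)
      · exact Or.inr (hqmono hh)
  have hinter : (Set.range e ∩ Set.range q).ncard ≤ 1 := by
    have hsub : Set.range e ∩ Set.range q ⊆ {a} := by
      rintro x ⟨hx, hqx⟩
      exact le_antisymm (hPa x hx) (hQa x hqx)
    calc (Set.range e ∩ Set.range q).ncard ≤ ({a} : Set α).ncard :=
          Set.ncard_le_ncard hsub (Set.finite_singleton a)
      _ = 1 := Set.ncard_singleton a
  have huni := Set.ncard_union_add_ncard_inter (Set.range e) (Set.range q)
  refine ⟨Set.range e ∪ Set.range q, Or.inr ⟨l, rfl⟩, hchain, fun D hD => ?_⟩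
  have hDle := chain_card_le hJ hD
  omega

/-- The meet of two elements on maximum-cardinality chains is on a maximum chain. -/
lemma spine_inf {n : ℕ} (hJ : Nat.card {v : α // JoinIrred v} = n)
    {c d : Fin (n+1) → α} (hc : StrictMono c) (hd : StrictMono d)
    (k l : Fin (n+1)) : Spine (c k ⊓ d l) := by
  have hkn : (k : ℕ) ≤ n := Nat.lt_succ_iff.mp k.isLt
  set a := c k with ha
  set q : Fin (n+1) → α := fun i => a ⊓ d i with hq
  have hqmono : Monotone q := fun i j hij => inf_le_inf_left a (hd.monotone hij)
  set S := {i : Fin n | q i.castSucc < q i.succ} with hS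
  obtain ⟨m, hm1, hm2, hm3, hm4⟩ := steps_JI hd
  obtain ⟨mc, hmc1, hmc2, hmc3, hmc4⟩ := steps_JI hc
  -- the join-irreducible of a degenerate step is not below `a`
  have hdeg : ∀ i : Fin n, i ∈ Sᶜ → ¬ m i ≤ a := by
    intro i hi hle
    rw [Set.mem_compl_iff, hS, Set.mem_setOf_eq] at hi
    have heq : q i.castSucc = q i.succ :=
      ((hqmono (Fin.castSucc_lt_succ (i := i)).le).lt_or_eq).resolve_left hi
    apply hm3 i
    calc m i ≤ a ⊓ d i.succ := le_inf hle (hm2 i)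
      _ = q i.castSucc := heq.symm
      _ ≤ d i.castSucc := inf_le_right
  -- join-irreducibles of lower steps of `c` are below `a`
  have hlow : ∀ j : Fin (k : ℕ), mc ⟨(j : ℕ), by omega⟩ ≤ a := by
    intro j
    refine le_trans (hmc2 ⟨(j : ℕ), by omega⟩) (hc.monotone ?_)
    rw [Fin.le_def, Fin.val_succ]
    simp only [ha]
    omega
  have hkey : (Sᶜ : Set (Fin n)).ncard + (k : ℕ) ≤ n := by
    have hinj : Function.Injective (fun z : ↥(Sᶜ) ⊕ Fin (k : ℕ) =>
        (match z with
          | Sum.inl i => (⟨m i, hm1 _⟩ : {v : α // JoinIrred v})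
          | Sum.inr j => ⟨mc ⟨(j : ℕ), by omega⟩, hmc1 _⟩)) := by
      rintro (⟨i, hi⟩ | j) (⟨i', hi'⟩ | j') he <;> simp only [Subtype.mk.injEq] at he
      · have : i = i' := by
          rcases lt_trichotomy i i' with hlt | heq | hlt
          · exact absurd he (hm4 _ _ hlt)
          · exact heq
          · exact absurd he.symm (hm4 _ _ hlt)
        subst this
        rfl
      · exact absurd (he ▸ hlow j') (hdeg i hi)
      · exact absurd (he ▸ hlow j) (hdeg i' hi')
      · have hidx : (⟨(j : ℕ), by omega⟩ : Fin n) = ⟨(j' : ℕ), by omega⟩ := by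
          rcases lt_trichotomy (⟨(j : ℕ), by omega⟩ : Fin n) ⟨(j' : ℕ), by omega⟩
            with hlt | heq | hlt
          · exact absurd he (hmc4 _ _ hlt)
          · exact heq
          · exact absurd he.symm (hmc4 _ _ hlt)
        have : (j : ℕ) = (j' : ℕ) := by
          have := Fin.val_eq_of_eq hidx
          simpa using this
        simp [Fin.ext_iff, this]
    have hle := Nat.card_le_card_of_injective _ hinj
    rw [Nat.card_sum, hJ] at hle
    simpa [Nat.card_coe_set_eq] using hle
  have hcompl : (S : Set (Fin n)).ncard + (Sᶜ : Set (Fin n)).ncard = n := by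
    have := Set.ncard_add_ncard_compl S
    simpa using this
  have hQ : (k : ℕ) + 1 ≤ (Set.range q).ncard := by
    have := range_card_ge q hqmono
    rw [← hS] at this
    omega
  -- the upper chain
  set e : Fin (n - (k : ℕ) + 1) → α := fun i => c ⟨(k : ℕ) + i, by omega⟩ with he
  have hemono : StrictMono e := by
    intro i j hij
    apply hc
    rw [Fin.lt_def]
    simpa using hij
  have hPcard : (Set.range e).ncard = n - (k : ℕ) + 1 := by
    rw [← Nat.card_coe_set_eq, Nat.card_range_of_injective hemono.injective]
    simp
  have hPa : ∀ p ∈ Set.range e, a ≤ p := by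
    rintro _ ⟨i, rfl⟩
    apply hc.monotone
    rw [Fin.le_def]
    simpa using by omega
  have hQa : ∀ x ∈ Set.range q, x ≤ a := by
    rintro _ ⟨i, rfl⟩
    exact inf_le_left
  have hchain : IsChain (· ≤ ·) (Set.range e ∪ Set.range q) := by
    rintro x (hx | hx) y (hy | hy) hne
    · obtain ⟨i, rfl⟩ := hx; obtain ⟨j, rfl⟩ := hy
      rcases le_total i j with hh | hh
      · exact Or.inl (hemono.monotone hh)
      · exact Or.inr (hemono.monotone hh)
    · exact Or.inr ((hQa y hy).trans (hPa x hx))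
    · exact Or.inl ((hQa x hx).trans (hPa y hy))
    · obtain ⟨i, rfl⟩ := hx; obtain ⟨j, rfl⟩ := hy
      rcases le_total i j with hh | hh
      · exact Or.inl (hqmono hh)
      · exact Or.inr (hqmono hh)
  have hinter : (Set.range e ∩ Set.range q).ncard ≤ 1 := by
    have hsub : Set.range e ∩ Set.range q ⊆ {a} := by
      rintro x ⟨hx, hqx⟩
      exact le_antisymm (hQa x hqx) (hPa x hx)
    calc (Set.range e ∩ Set.range q).ncard ≤ ({a} : Set α).ncard :=
          Set.ncard_le_ncard hsub (Set.finite_singleton a)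
      _ = 1 := Set.ncard_singleton a
  have huni := Set.ncard_union_add_ncard_inter (Set.range e) (Set.range q)
  refine ⟨Set.range e ∪ Set.range q, Or.inr ⟨l, rfl⟩, hchain, fun D hD => ?_⟩
  have hDle := chain_card_le hJ hD
  omega

end Helpers

/-- The spine of a trim lattice is closed under join and meet. -/
theorem spine_sublattice [Lattice α] [Finite α] (h : Trim α) (a b : α)
    (ha : Spine a) (hb : Spine b) :
    Spine (a ⊔ b) ∧ Spine (a ⊓ b) := by
  obtain ⟨n, x, hx, hJ, hM⟩ := h
  have hxmono : StrictMono x :=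
    Fin.strictMono_iff_lt_succ.mpr fun i => (hx.2.2.1 i).lt
  have hxchain : IsChain (· ≤ ·) (Set.range x) := by
    rintro _ ⟨i, rfl⟩ _ ⟨j, rfl⟩ hne
    rcases le_total i j with hh | hh
    · exact Or.inl (hxmono.monotone hh)
    · exact Or.inr (hxmono.monotone hh)
  have hxcard : (Set.range x).ncard = n + 1 := by
    rw [← Nat.card_coe_set_eq, Nat.card_range_of_injective hxmono.injective]
    simp
  obtain ⟨C, haC, hCchain, hCmax⟩ := ha
  obtain ⟨D, hbD, hDchain, hDmax⟩ := hb
  have hCcard : C.ncard = n + 1 :=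
    le_antisymm (chain_card_le hJ hCchain) (hxcard ▸ hCmax (Set.range x) hxchain)
  have hDcard : D.ncard = n + 1 :=
    le_antisymm (chain_card_le hJ hDchain) (hxcard ▸ hDmax (Set.range x) hxchain)
  obtain ⟨c, hc, hcr⟩ := chain_enum hCchain hCcard
  obtain ⟨d, hd, hdr⟩ := chain_enum hDchain hDcard
  obtain ⟨k, hk⟩ : a ∈ Set.range c := hcr ▸ haC
  obtain ⟨l, hl⟩ : b ∈ Set.range d := hdr ▸ hbD
  subst hk hl
  exact ⟨spine_sup hJ hM hc hd k l, spine_inf hJ hc hd k l⟩
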